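/- Let d and p be positive natural numbers, let ν be the product measure on matrices R ∈ (Fin p → Fin d → ℝ) in which every entry R i j is an independent standard Gaussian N(0,1), and fix a nonzero vector y ∈ ℝ^d. For a matrix R define z(R) := (1/√p)·(R·y) ∈ ℝ^p. Then for every ε with 0 < ε < 1, ν { R | | ‖z(R)‖² − ‖y‖² | > ε·‖y‖² } ≤ 2·exp(−(3ε² − 2ε³)·p/12). -/

import Mathlib

open MeasureTheory ProbabilityTheory Matrix

section AuxJL
open MeasureTheory ProbabilityTheory Real
open scoped ENNReal


lemma integrable_rexp_quadratic {a : ℝ} (ha : a < 0) (b c : ℝ) :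
    Integrable fun x : ℝ => rexp (a * x ^ 2 + b * x + c) := by
  have h := (integrable_cexp_quadratic' (b := (a : ℂ)) (by simpa using ha) (b : ℂ) (c : ℂ)).norm
  refine h.congr (Filter.Eventually.of_forall fun x => ?_)
  have e : ((a:ℂ) * x ^ 2 + b * x + c) = ((a * x ^ 2 + b * x + c : ℝ) : ℂ) := by push_cast; ring
  have e2 : ‖Complex.exp ((a:ℂ) * x ^ 2 + b * x + c)‖ = rexp (a*x^2+b*x+c) := by
    rw [e, ← Complex.ofReal_exp, Complex.norm_real, Real.norm_eq_abs, abs_of_nonneg (exp_nonneg _)]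
  simpa using e2

lemma integral_rexp_quadratic {a : ℝ} (ha : a < 0) (b c : ℝ) :
    ∫ x : ℝ, rexp (a * x ^ 2 + b * x + c)
      = Real.sqrt (π / (-a)) * rexp (c - b ^ 2 / (4 * a)) := by
  have h := integral_cexp_quadratic (b := (a : ℂ)) (by simpa using ha) (b : ℂ) (c : ℂ)
  have h2 : ∀ x : ℝ, Complex.exp ((a:ℂ) * x ^ 2 + b * x + c)
      = ((rexp (a * x ^ 2 + b * x + c) : ℝ) : ℂ) := by
    intro x; rw [Complex.ofReal_exp]; push_cast; ring_nf
  simp_rw [h2] at h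
  have hπ : (0:ℝ) < π / (-a) := div_pos pi_pos (by linarith)
  have h3 : ((π : ℂ) / (-(a:ℂ))) ^ (1/2 : ℂ) = ((Real.sqrt (π / -a) : ℝ) : ℂ) := by
    rw [Real.sqrt_eq_rpow, Complex.ofReal_cpow hπ.le]
    push_cast
    ring_nf
  rw [h3] at h
  have h4 : Complex.exp ((c:ℂ) - (b:ℂ)^2 / (4 * (a:ℂ))) = ((rexp (c - b^2/(4*a)) : ℝ) : ℂ) := by
    rw [Complex.ofReal_exp]; push_cast; ring_nf
  rw [h4, ← Complex.ofReal_mul] at h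
  exact Complex.ofReal_injective ((integral_ofReal (𝕜 := ℂ)).symm.trans h)


open scoped ENNReal

lemma lintegral_gauss_quad {a : ℝ} (ha : a < 1/2) (b c : ℝ) :
    ∫⁻ x, ENNReal.ofReal (rexp (a * x ^ 2 + b * x + c)) ∂gaussianReal 0 1
      = ENNReal.ofReal ((Real.sqrt (1 - 2*a))⁻¹ * rexp (c + b^2 / (2*(1-2*a)))) := by
  have hmf : Measurable fun x : ℝ => ENNReal.ofReal (rexp (a * x ^ 2 + b * x + c)) := by
    fun_prop
  rw [gaussianReal_of_var_ne_zero _ one_ne_zero,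
    lintegral_withDensity_eq_lintegral_mul _ (measurable_gaussianPDF _ _) hmf]
  have hpdf : ∀ x : ℝ, gaussianPDF 0 1 x = ENNReal.ofReal (gaussianPDFReal 0 1 x) := fun x => rfl
  have key : ∀ x : ℝ, (gaussianPDF 0 1 x * ENNReal.ofReal (rexp (a * x ^ 2 + b * x + c)))
      = ENNReal.ofReal ((Real.sqrt (2*π))⁻¹ * rexp ((a - 1/2) * x ^ 2 + b * x + c)) := by
    intro x
    rw [hpdf, ← ENNReal.ofReal_mul (gaussianPDFReal_nonneg _ _ _)]
    congr 1
    rw [gaussianPDFReal]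
    push_cast
    rw [mul_assoc, ← Real.exp_add]
    ring_nf
  simp only [Pi.mul_apply]
  rw [show (fun x => gaussianPDF 0 1 x * ENNReal.ofReal (rexp (a * x ^ 2 + b * x + c)))
      = fun x => ENNReal.ofReal ((Real.sqrt (2*π))⁻¹ * rexp ((a - 1/2) * x ^ 2 + b * x + c)) from
    funext key]
  have ha' : a - 1/2 < 0 := by linarith
  have hK : (0:ℝ) ≤ (Real.sqrt (2*π))⁻¹ := by positivity
  have hint : Integrable (fun x : ℝ =>
      (Real.sqrt (2*π))⁻¹ * rexp ((a - 1/2) * x ^ 2 + b * x + c)) :=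
    (integrable_rexp_quadratic ha' b c).const_mul _
  rw [← ofReal_integral_eq_lintegral_ofReal hint
    (Filter.Eventually.of_forall fun x => by positivity)]
  congr 1
  rw [integral_const_mul, integral_rexp_quadratic ha' b c]
  have h12 : (0:ℝ) < 1 - 2*a := by linarith
  have h5 : Real.sqrt (π/(1/2-a)) = Real.sqrt (2*π) * (Real.sqrt (1-2*a))⁻¹ := by
    rw [← Real.sqrt_inv, ← Real.sqrt_mul (by positivity)]
    congr 1
    field_simp
  have hE : c - b ^ 2 / (4 * (a - 1/2)) = c + b^2 / (2*(1-2*a)) := by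
    rw [show (4:ℝ)*(a-1/2) = -(2*(1-2*a)) by ring, div_neg]
    ring
  rw [show -(a - 1/2) = 1/2 - a by ring] at *
  rw [h5, hE]
  have h2π : Real.sqrt (2*π) ≠ 0 := by positivity
  field_simp


lemma gauss_alg (t w0 b S : ℝ) (hD' : 0 < 1-2*t*S) (hD : 0 < 1-2*t*(w0^2+S)) :
    (Real.sqrt (1-2*t*S))⁻¹ *
      ((Real.sqrt (1 - 2*(t*w0^2/(1-2*t*S))))⁻¹ *
        rexp (t*b^2/(1-2*t*S)
          + (2*t*w0*b/(1-2*t*S))^2/(2*(1-2*(t*w0^2/(1-2*t*S))))))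
      = (Real.sqrt (1-2*t*(w0^2+S)))⁻¹ * rexp (t*b^2/(1-2*t*(w0^2+S))) := by
  have hD'ne : (1-2*t*S) ≠ 0 := hD'.ne'
  have hDne : (1-2*t*(w0^2+S)) ≠ 0 := hD.ne'
  have hDD' : 1 - 2*(t*w0^2/(1-2*t*S)) = (1-2*t*(w0^2+S))/(1-2*t*S) := by
    field_simp; ring
  rw [hDD', Real.sqrt_div hD.le]
  have hA : t*b^2/(1-2*t*S)
      + (2*t*w0*b/(1-2*t*S))^2/(2*((1-2*t*(w0^2+S))/(1-2*t*S)))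
      = t*b^2/(1-2*t*(w0^2+S)) := by
    rw [div_add_div _ _ hD'ne (by positivity), div_eq_div_iff (by positivity) hDne]
    field_simp
    ring
  rw [hA]
  have h1 : Real.sqrt (1-2*t*S) ≠ 0 := (Real.sqrt_pos.mpr hD').ne'
  have h2 : Real.sqrt (1-2*t*(w0^2+S)) ≠ 0 := (Real.sqrt_pos.mpr hD).ne'
  field_simp

lemma lintegral_pi_gauss_quadform (n : ℕ) :
    ∀ (w : Fin n → ℝ) (t b : ℝ), 2 * t * (∑ j, w j ^ 2) < 1 →
    ∫⁻ x : Fin n → ℝ, ENNReal.ofReal (rexp (t * ((∑ j, x j * w j) + b) ^ 2))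
        ∂(Measure.pi fun _ : Fin n => gaussianReal 0 1)
      = ENNReal.ofReal ((Real.sqrt (1 - 2*t*(∑ j, w j ^ 2)))⁻¹
          * rexp (t * b^2 / (1 - 2*t*(∑ j, w j ^ 2)))) := by
  induction n with
  | zero =>
      intro w t b h
      simp [lintegral_const]
  | succ n ih =>
      intro w t b h
      have hS' : (0:ℝ) ≤ ∑ j : Fin n, w (Fin.succ j) ^ 2 :=
        Finset.sum_nonneg fun j _ => sq_nonneg _
      have hsum : (∑ j : Fin (n+1), w j ^ 2)
          = w 0 ^ 2 + ∑ j : Fin n, w (Fin.succ j) ^ 2 := Fin.sum_univ_succ _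
      have h' : 2 * t * (∑ j : Fin n, w (Fin.succ j) ^ 2) < 1 := by
        rcases le_or_gt t 0 with ht | ht
        · nlinarith
        · nlinarith [sq_nonneg (w 0)]
      have hD' : (0:ℝ) < 1 - 2*t*(∑ j : Fin n, w (Fin.succ j) ^ 2) := by linarith
      have hD : (0:ℝ) < 1 - 2*t*(∑ j : Fin (n+1), w j ^ 2) := by linarith
      have mp := (measurePreserving_piFinSuccAbove
        (fun _ : Fin (n+1) => gaussianReal 0 1) 0).symm
      rw [← mp.lintegral_comp_emb (MeasurableEquiv.measurableEmbedding _)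
        (fun x => ENNReal.ofReal (rexp (t * ((∑ j, x j * w j) + b) ^ 2)))]
      simp_rw [MeasurableEquiv.piFinSuccAbove_symm_apply, Fin.insertNthEquiv,
        Equiv.coe_fn_mk, Fin.insertNth_zero]
      simp only [Fin.sum_univ_succ, Fin.zero_succAbove, cast_eq, Fin.cons_zero, Fin.cons_succ]
      have hmeas : Measurable (fun z : ℝ × (Fin n → ℝ) =>
          ENNReal.ofReal (rexp (t * ((z.1 * w 0 + ∑ j : Fin n, z.2 j * w (Fin.succ j)) + b) ^ 2))) := by
        fun_prop
      rw [lintegral_prod _ hmeas.aemeasurable]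
      have inner : ∀ x0 : ℝ,
          (∫⁻ x' : Fin n → ℝ, ENNReal.ofReal
            (rexp (t * (x0 * w 0 + ∑ j : Fin n, x' j * w (Fin.succ j) + b) ^ 2))
            ∂(Measure.pi fun _ : Fin n => gaussianReal 0 1))
          = ENNReal.ofReal ((Real.sqrt (1 - 2*t*(∑ j : Fin n, w (Fin.succ j) ^ 2)))⁻¹
              * rexp (t * (x0 * w 0 + b)^2
                  / (1 - 2*t*(∑ j : Fin n, w (Fin.succ j) ^ 2)))) := by
        intro x0
        rw [show (fun x' : Fin n → ℝ => ENNReal.ofReal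
            (rexp (t * (x0 * w 0 + ∑ j : Fin n, x' j * w (Fin.succ j) + b) ^ 2)))
          = fun x' => ENNReal.ofReal
            (rexp (t * ((∑ j : Fin n, x' j * w (Fin.succ j)) + (x0 * w 0 + b)) ^ 2)) from
          funext fun x' => by ring_nf]
        exact ih (fun j => w (Fin.succ j)) t (x0 * w 0 + b) h'
      rw [lintegral_congr inner]
      simp_rw [ENNReal.ofReal_mul (by positivity :
        (0:ℝ) ≤ (Real.sqrt (1 - 2*t*(∑ j : Fin n, w (Fin.succ j) ^ 2)))⁻¹)]
      rw [lintegral_const_mul _ (by fun_prop)]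
      have harg : (fun x0 : ℝ => ENNReal.ofReal (rexp (t * (x0 * w 0 + b)^2
            / (1 - 2*t*(∑ j : Fin n, w (Fin.succ j) ^ 2)))))
          = fun x0 : ℝ => ENNReal.ofReal (rexp (
              (t * (w 0)^2/(1 - 2*t*(∑ j : Fin n, w (Fin.succ j) ^ 2))) * x0^2
              + (2*t*(w 0)*b/(1 - 2*t*(∑ j : Fin n, w (Fin.succ j) ^ 2))) * x0
              + t*b^2/(1 - 2*t*(∑ j : Fin n, w (Fin.succ j) ^ 2)))) := by
        funext x0
        congr 1
        field_simp
        ring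
      have ha2 : t * (w 0)^2/(1 - 2*t*(∑ j : Fin n, w (Fin.succ j) ^ 2)) < 1/2 := by
        rw [div_lt_iff₀ hD']
        have hh := h
        rw [hsum] at hh
        nlinarith [hh]
      rw [harg, lintegral_gauss_quad ha2 _ _, ← ENNReal.ofReal_mul (by positivity)]
      have hD2 : (0:ℝ) < 1 - 2*t*((w 0)^2 + ∑ j : Fin n, w (Fin.succ j) ^ 2) := by
        rw [hsum] at hD; exact hD
      exact congrArg ENNReal.ofReal
        (gauss_alg t (w 0) b (∑ j : Fin n, w (Fin.succ j) ^ 2) hD' hD2)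


lemma lintegral_pi_pow {α : Type*} [MeasurableSpace α] (μ : Measure α) [SigmaFinite μ]
    (n : ℕ) (g : α → ℝ≥0∞) (hg : Measurable g) :
    ∫⁻ x : Fin n → α, ∏ i, g (x i) ∂(Measure.pi fun _ : Fin n => μ)
      = (∫⁻ a, g a ∂μ) ^ n := by
  induction n with
  | zero => simp
  | succ n ih =>
      have mp := (measurePreserving_piFinSuccAbove (fun _ : Fin (n+1) => μ) 0).symm
      rw [← mp.lintegral_comp_emb (MeasurableEquiv.measurableEmbedding _)
        (fun x => ∏ i, g (x i))]
      simp_rw [MeasurableEquiv.piFinSuccAbove_symm_apply, Fin.insertNthEquiv,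
        Equiv.coe_fn_mk, Fin.insertNth_zero]
      simp only [Fin.prod_univ_succ, Fin.zero_succAbove, cast_eq, Fin.cons_zero, Fin.cons_succ]
      rw [lintegral_prod_mul (f := g) (g := fun x' : Fin n → α => ∏ i, g (x' i))
        hg.aemeasurable
        (Measurable.aemeasurable (Finset.measurable_prod Finset.univ
          (fun i _ => hg.comp (measurable_pi_apply i)))), ih]
      ring

lemma key_ineq {x : ℝ} (h1 : -1 ≤ x) (h2 : x ≤ 1) :
    (1 + x) * rexp (-x + x^2/2 - x^3/3) ≤ 1 := by
  set F : ℝ → ℝ := fun y => (1 + y) * rexp (-y + y^2/2 - y^3/3) with hF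
  have hd : ∀ y : ℝ, HasDerivAt F (-y^3 * rexp (-y + y^2/2 - y^3/3)) y := by
    intro y
    have hq : HasDerivAt (fun z : ℝ => -z + z^2/2 - z^3/3) (-1 + y - y^2) y := by
      have := (((hasDerivAt_id y).neg).add ((hasDerivAt_pow 2 y).div_const 2)).sub
        ((hasDerivAt_pow 3 y).div_const 3)
      refine this.congr_deriv ?_
      norm_num
    have h1' : HasDerivAt (fun z : ℝ => 1 + z) 1 y := by
      simpa using (hasDerivAt_id y).const_add 1
    have := h1'.mul hq.exp
    refine this.congr_deriv ?_
    ring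
  have hF0 : F 0 = 1 := by simp [hF]
  have hcont : Continuous F := by
    apply Continuous.mul
    · continuity
    · exact Real.continuous_exp.comp (by continuity)
  rcases le_or_gt 0 x with hx | hx
  · have hanti : AntitoneOn F (Set.Icc 0 1) := by
      apply antitoneOn_of_deriv_nonpos (convex_Icc 0 1) hcont.continuousOn
        (fun y _ => (hd y).differentiableAt.differentiableWithinAt)
      intro y hy
      rw [(hd y).deriv, interior_Icc] at *
      nlinarith [Real.exp_pos (-y + y^2/2 - y^3/3), hy.1, pow_pos hy.1 3]
    have hle : F x ≤ F 0 := hanti (Set.mem_Icc.mpr ⟨le_refl 0, zero_le_one⟩)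
        (Set.mem_Icc.mpr ⟨hx, h2⟩) hx
    rw [hF0] at hle
    exact hle
  · have hmono : MonotoneOn F (Set.Icc (-1) 0) := by
      apply monotoneOn_of_deriv_nonneg (convex_Icc (-1) 0) hcont.continuousOn
        (fun y _ => (hd y).differentiableAt.differentiableWithinAt)
      intro y hy
      rw [(hd y).deriv, interior_Icc] at *
      nlinarith [Real.exp_pos (-y + y^2/2 - y^3/3), hy.2, pow_pos (neg_pos.mpr hy.2) 3]
    have hle : F x ≤ F 0 := hmono (Set.mem_Icc.mpr ⟨h1, hx.le⟩)
        (Set.mem_Icc.mpr ⟨by norm_num, le_refl 0⟩) hx.le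
    rw [hF0] at hle
    exact hle

end AuxJL

open Real in
open scoped ENNReal in
/-- Norm-preservation bound for a random Gaussian projection: if `ν` is the
measure on `p×d` matrices with iid standard Gaussian entries, `y ∈ ℝ^d` is
nonzero and `z(R) = (1/√p) (R y)`, then for `0 < ε < 1`,
`ν {R | |‖z R‖² - ‖y‖²| > ε ‖y‖²} ≤ 2 exp (-(3ε² - 2ε³) p / 12)`. -/
theorem stmt13 (d p : ℕ) (hd : 0 < d) (hp : 0 < p)
    (y : EuclideanSpace ℝ (Fin d)) (hy : y ≠ 0)
    (ε : ℝ) (hε0 : 0 < ε) (hε1 : ε < 1) :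
    (Measure.pi fun _ : Fin p => Measure.pi fun _ : Fin d => gaussianReal 0 1)
        {R : Fin p → Fin d → ℝ |
          |‖(WithLp.equiv 2 (Fin p → ℝ)).symm
                ((1 / Real.sqrt p) •
                  ((Matrix.of R) *ᵥ (WithLp.equiv 2 (Fin d → ℝ)) y))‖ ^ 2
              - ‖y‖ ^ 2| > ε * ‖y‖ ^ 2}
      ≤ ENNReal.ofReal (2 * Real.exp (-(3 * ε ^ 2 - 2 * ε ^ 3) * p / 12)) := by
  have hcpos : (0:ℝ) < ‖y‖^2 := by
    have h0 : ‖y‖ ≠ 0 := norm_ne_zero_iff.mpr hy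
    positivity
  set c : ℝ := ‖y‖^2 with hcdef
  have hcs : c = ∑ j, (y j)^2 := by
    rw [hcdef, EuclideanSpace.norm_eq, Real.sq_sqrt (Finset.sum_nonneg fun i _ => by positivity)]
    simp [sq_abs]
  have hppos : (0:ℝ) < p := by exact_mod_cast hp
  set ν := (Measure.pi fun _ : Fin p => Measure.pi fun _ : Fin d => gaussianReal 0 1) with hν
  set T : (Fin p → Fin d → ℝ) → ℝ := fun R => ∑ i, (∑ j, R i j * y j)^2 with hT
  have hTmeas : Measurable T := by rw [hT]; fun_prop
  have hnorm : ∀ R : Fin p → Fin d → ℝ,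
      ‖(WithLp.equiv 2 (Fin p → ℝ)).symm
          ((1 / Real.sqrt p) • ((Matrix.of R) *ᵥ (WithLp.equiv 2 (Fin d → ℝ)) y))‖ ^ 2
        = T R / p := by
    intro R
    rw [EuclideanSpace.norm_eq, Real.sq_sqrt (Finset.sum_nonneg fun i _ => by positivity)]
    simp only [WithLp.equiv_symm_apply, PiLp.toLp_apply, Pi.smul_apply, smul_eq_mul, Matrix.mulVec,
      Matrix.of_apply, dotProduct, Real.norm_eq_abs, sq_abs, WithLp.equiv_apply]
    simp_rw [mul_pow, div_pow, one_pow, Real.sq_sqrt (Nat.cast_nonneg p)]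
    rw [hT]
    simp only
    rw [Finset.sum_div]
    refine Finset.sum_congr rfl fun i _ => ?_
    ring
  -- MGF of T under ν
  have hmgf : ∀ t : ℝ, 2 * t * c < 1 →
      ∫⁻ R, ENNReal.ofReal (rexp (t * T R)) ∂ν
        = ENNReal.ofReal ((Real.sqrt (1 - 2*t*c))⁻¹) ^ p := by
    intro t ht
    have hw : 2 * t * (∑ j : Fin d, (y j) ^ 2) < 1 := by rw [← hcs]; exact ht
    have hrow := lintegral_pi_gauss_quadform d (fun j => y j) t 0 hw
    simp only [add_zero, ne_eq, OfNat.ofNat_ne_zero, not_false_eq_true, zero_pow, mul_zero,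
      zero_div, Real.exp_zero, mul_one] at hrow
    rw [← hcs] at hrow
    have hg : Measurable (fun x : Fin d → ℝ => ENNReal.ofReal (rexp (t * (∑ j, x j * y j)^2))) := by
      fun_prop
    have hsplit : (fun R : Fin p → Fin d → ℝ => ENNReal.ofReal (rexp (t * T R)))
        = fun R => ∏ i, (fun x : Fin d → ℝ =>
            ENNReal.ofReal (rexp (t * (∑ j, x j * y j)^2))) (R i) := by
      funext R
      rw [hT]
      simp only
      rw [Finset.mul_sum, Real.exp_sum,
        ENNReal.ofReal_prod_of_nonneg (fun i _ => Real.exp_nonneg _)]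
    rw [hsplit, hν, lintegral_pi_pow _ p _ hg, hrow]
  -- Markov bound
  have markov : ∀ (t A : ℝ), 2*t*c < 1 →
      ν {R | ENNReal.ofReal (rexp (t*A)) ≤ ENNReal.ofReal (rexp (t * T R))}
        ≤ ENNReal.ofReal (rexp (-(t*A)))
            * ENNReal.ofReal ((Real.sqrt (1 - 2*t*c))⁻¹) ^ p := by
    intro t A ht
    have hfm : AEMeasurable (fun R => ENNReal.ofReal (rexp (t * T R))) ν :=
      (ENNReal.measurable_ofReal.comp (Real.measurable_exp.comp (hTmeas.const_mul t))).aemeasurable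
    have h1 := mul_meas_ge_le_lintegral₀ (μ := ν) hfm (ENNReal.ofReal (rexp (t*A)))
    rw [hmgf t ht] at h1
    have hr0 : ENNReal.ofReal (rexp (t*A)) ≠ 0 := by
      simp [Real.exp_pos]
    have hrtop : ENNReal.ofReal (rexp (t*A)) ≠ ⊤ := ENNReal.ofReal_ne_top
    have hinv : (ENNReal.ofReal (rexp (t*A)))⁻¹ = ENNReal.ofReal (rexp (-(t*A))) := by
      rw [Real.exp_neg, ENNReal.ofReal_inv_of_pos (Real.exp_pos _)]
    calc ν {R | ENNReal.ofReal (rexp (t*A)) ≤ ENNReal.ofReal (rexp (t * T R))}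
        = (ENNReal.ofReal (rexp (t*A)))⁻¹ * (ENNReal.ofReal (rexp (t*A))
            * ν {R | ENNReal.ofReal (rexp (t*A)) ≤ ENNReal.ofReal (rexp (t * T R))}) := by
          rw [← mul_assoc, ENNReal.inv_mul_cancel hr0 hrtop, one_mul]
      _ ≤ (ENNReal.ofReal (rexp (t*A)))⁻¹
            * ENNReal.ofReal ((Real.sqrt (1 - 2*t*c))⁻¹) ^ p := mul_le_mul' le_rfl h1
      _ = ENNReal.ofReal (rexp (-(t*A)))
            * ENNReal.ofReal ((Real.sqrt (1 - 2*t*c))⁻¹) ^ p := by rw [hinv]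
  set X : ℝ := rexp (-(3*ε^2-2*ε^3)/12) with hX
  have hsq : ∀ a : ℝ, Real.sqrt (rexp a) = rexp (a/2) := fun a => by
    rw [show rexp a = rexp (a/2) ^ 2 from by rw [pow_two, ← Real.exp_add]; ring_nf,
      Real.sqrt_sq (Real.exp_nonneg _)]
  have tail_u : ν {R | (1+ε)*(p*c) < T R} ≤ ENNReal.ofReal (X ^ p) := by
    set t : ℝ := ε/(2*c*(1+ε)) with htdef
    have htpos : 0 < t := by
      apply div_pos hε0
      positivity
    have h2tc : 2*t*c = ε/(1+ε) := by rw [htdef]; field_simp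
    have ht1 : 2*t*c < 1 := by
      rw [h2tc, div_lt_one (by linarith)]; linarith
    have hD : (1:ℝ) - 2*t*c = (1+ε)⁻¹ := by
      rw [h2tc]; field_simp; ring
    have hsqrt : (Real.sqrt (1 - 2*t*c))⁻¹ = Real.sqrt (1+ε) := by
      rw [hD, Real.sqrt_inv, inv_inv]
    have hA : t * ((1+ε)*(p*c)) = ε*p/2 := by
      rw [htdef]; field_simp
    have hsub : {R : Fin p → Fin d → ℝ | (1+ε)*(p*c) < T R} ⊆
        {R | ENNReal.ofReal (rexp (t*((1+ε)*(p*c)))) ≤ ENNReal.ofReal (rexp (t * T R))} := by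
      intro R hR
      simp only [Set.mem_setOf_eq] at hR ⊢
      exact ENNReal.ofReal_le_ofReal (Real.exp_le_exp.mpr
        (mul_le_mul_of_nonneg_left hR.le htpos.le))
    have hb := (measure_mono hsub).trans (markov t ((1+ε)*(p*c)) ht1)
    rw [hsqrt, hA] at hb
    refine hb.trans ?_
    rw [← ENNReal.ofReal_pow (Real.sqrt_nonneg _), ← ENNReal.ofReal_mul (Real.exp_nonneg _)]
    apply ENNReal.ofReal_le_ofReal
    have hexp_p : rexp (-(ε*p/2)) = rexp (-(ε/2)) ^ p := by
      rw [← Real.exp_nat_mul]; congr 1; ring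
    rw [hexp_p, ← mul_pow]
    apply pow_le_pow_left₀ (by positivity)
    have hk := key_ineq (x := ε) (by linarith) hε1.le
    have h2 : (1+ε) * rexp (-ε) ≤ rexp (-ε^2/2 + ε^3/3) := by
      have hmul := mul_le_mul_of_nonneg_right hk (Real.exp_nonneg (-ε^2/2 + ε^3/3))
      rw [one_mul] at hmul
      calc (1+ε) * rexp (-ε)
          = (1+ε) * rexp (-ε + ε^2/2 - ε^3/3) * rexp (-ε^2/2 + ε^3/3) := by
            rw [mul_assoc, ← Real.exp_add]; ring_nf
        _ ≤ rexp (-ε^2/2 + ε^3/3) := hmul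
    calc rexp (-(ε/2)) * Real.sqrt (1+ε)
        = Real.sqrt ((1+ε) * rexp (-ε)) := by
          rw [Real.sqrt_mul (by linarith : (0:ℝ) ≤ 1+ε), hsq, neg_div]
          ring
      _ ≤ Real.sqrt (rexp (-ε^2/2 + ε^3/3)) := Real.sqrt_le_sqrt h2
      _ = X := by rw [hsq, hX]; congr 1; ring
  have tail_l : ν {R | T R < (1-ε)*(p*c)} ≤ ENNReal.ofReal (X ^ p) := by
    set s : ℝ := ε/(2*c*(1-ε)) with hsdef
    have h1ε : (0:ℝ) < 1 - ε := by linarith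
    have hden : (0:ℝ) < 2*c*(1-ε) := by positivity
    have hspos : 0 < s := div_pos hε0 hden
    have h2sc : 2*s*c = ε/(1-ε) := by rw [hsdef]; field_simp
    have ht1 : 2*(-s)*c < 1 := by nlinarith
    have hD : (1:ℝ) - 2*(-s)*c = (1-ε)⁻¹ := by
      rw [show 2*(-s)*c = -(2*s*c) by ring, h2sc]
      field_simp; ring
    have hsqrt : (Real.sqrt (1 - 2*(-s)*c))⁻¹ = Real.sqrt (1-ε) := by
      rw [hD, Real.sqrt_inv, inv_inv]
    have hA : (-s) * ((1-ε)*(p*c)) = -(ε*p/2) := by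
      rw [hsdef]; field_simp
    have hsub : {R : Fin p → Fin d → ℝ | T R < (1-ε)*(p*c)} ⊆
        {R | ENNReal.ofReal (rexp ((-s)*((1-ε)*(p*c))))
              ≤ ENNReal.ofReal (rexp ((-s) * T R))} := by
      intro R hR
      simp only [Set.mem_setOf_eq] at hR ⊢
      apply ENNReal.ofReal_le_ofReal
      apply Real.exp_le_exp.mpr
      nlinarith [hR.le]
    have hb := (measure_mono hsub).trans (markov (-s) ((1-ε)*(p*c)) ht1)
    rw [hsqrt, hA, neg_neg] at hb
    refine hb.trans ?_
    rw [← ENNReal.ofReal_pow (Real.sqrt_nonneg _), ← ENNReal.ofReal_mul (Real.exp_nonneg _)]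
    apply ENNReal.ofReal_le_ofReal
    have hexp_p : rexp (ε*p/2) = rexp (ε/2) ^ p := by
      rw [← Real.exp_nat_mul]; congr 1; ring
    rw [hexp_p, ← mul_pow]
    apply pow_le_pow_left₀ (by positivity)
    have hk := key_ineq (x := -ε) (by linarith) (by linarith)
    have hk' : (1-ε) * rexp (ε + ε^2/2 + ε^3/3) ≤ 1 := by
      rw [show (1:ℝ)-ε = 1 + -ε by ring,
        show ε + ε^2/2 + ε^3/3 = -(-ε) + (-ε)^2/2 - (-ε)^3/3 by ring]
      exact hk
    have h2 : (1-ε) * rexp ε ≤ rexp (-ε^2/2 + ε^3/3) := by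
      have hmul := mul_le_mul_of_nonneg_right hk' (Real.exp_nonneg (-ε^2/2 - ε^3/3))
      rw [one_mul] at hmul
      have heq : (1-ε) * rexp (ε + ε^2/2 + ε^3/3) * rexp (-ε^2/2 - ε^3/3)
          = (1-ε) * rexp ε := by
        rw [mul_assoc, ← Real.exp_add]; ring_nf
      rw [heq] at hmul
      refine hmul.trans (Real.exp_le_exp.mpr ?_)
      nlinarith [pow_pos hε0 3]
    calc rexp (ε/2) * Real.sqrt (1-ε)
        = Real.sqrt ((1-ε) * rexp ε) := by
          rw [Real.sqrt_mul h1ε.le, hsq]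
          ring
      _ ≤ Real.sqrt (rexp (-ε^2/2 + ε^3/3)) := Real.sqrt_le_sqrt h2
      _ = X := by rw [hsq, hX]; congr 1; ring
  have hsub2 : {R : Fin p → Fin d → ℝ |
        |‖(WithLp.equiv 2 (Fin p → ℝ)).symm
            ((1 / Real.sqrt p) • ((Matrix.of R) *ᵥ (WithLp.equiv 2 (Fin d → ℝ)) y))‖ ^ 2
          - c| > ε * c}
      ⊆ {R | (1+ε)*(p*c) < T R} ∪ {R | T R < (1-ε)*(p*c)} := by
    intro R hR
    simp only [Set.mem_setOf_eq, gt_iff_lt] at hR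
    rw [hnorm R] at hR
    rcases lt_abs.mp hR with h | h
    · left
      simp only [Set.mem_setOf_eq]
      have h' : (1+ε)*c < T R / p := by linarith
      have h2 := (lt_div_iff₀ hppos).mp h'
      rw [show (1+ε)*(↑p*c) = (1+ε)*c*↑p by ring]
      exact h2
    · right
      simp only [Set.mem_setOf_eq]
      have h' : T R / p < (1-ε)*c := by linarith
      have h2 := (div_lt_iff₀ hppos).mp h'
      rw [show (1-ε)*(↑p*c) = (1-ε)*c*↑p by ring]
      exact h2
  refine le_trans (measure_mono hsub2) ?_
  refine le_trans (measure_union_le _ _) ?_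
  refine le_trans (add_le_add tail_u tail_l) ?_
  rw [← ENNReal.ofReal_add (by positivity) (by positivity)]
  apply ENNReal.ofReal_le_ofReal
  have hXp : X^p = rexp (-(3*ε^2-2*ε^3)*p/12) := by
    rw [hX, ← Real.exp_nat_mul]
    congr 1
    ring
  rw [hXp]
  rw [show rexp (-(3*ε^2-2*ε^3)*↑p/12) + rexp (-(3*ε^2-2*ε^3)*↑p/12)
    = 2 * rexp (-(3*ε^2-2*ε^3)*↑p/12) by ring]
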